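/- Let L ≥ 1, D ≥ 1, N ≥ 1, and let X₀, X₁ ∈ ℂ^{(L·D)×N} be matrices whose rows are indexed by pairs (ℓ,d) ∈ {0,…,L−1}×{1,…,D}; write X^{(ℓ)} ∈ ℂ^{D×N} for the ℓth block row of X. Assume the delay-shift relations X₁^{(ℓ)} = X₀^{(ℓ+1)} for all ℓ = 0,…,L−2. Let B⋆ ∈ ℂ^{D×(L·D)} be any minimizer of the last block row problem, i.e. ‖B⋆ X₀ − X₁^{(L−1)}‖_F ≤ ‖B X₀ − X₁^{(L−1)}‖_F for all B ∈ ℂ^{D×(L·D)}. Let C ∈ ℂ^{(L·D)×(L·D)} be the matrix whose entries satisfy C_{(ℓ,d),(ℓ',d')} = 1 if ℓ < L−1, ℓ' = ℓ+1 and d' = d, C_{(ℓ,d),(ℓ',d')} = 0 if ℓ < L−1 otherwise, and whose last block row equals B⋆ (i.e. C_{(L−1,d),(ℓ',d')} = (B⋆)_{d,(ℓ',d')}). Then C is a global minimizer of the least-squares problem: for every A ∈ ℂ^{(L·D)×(L·D)}, ‖C X₀ − X₁‖_F ≤ ‖A X₀ − X₁‖_F. -/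

import Mathlib

/-- Frobenius norm of a complex matrix. -/
noncomputable def frobNorm {m n : Type*} [Fintype m] [Fintype n]
    (A : Matrix m n ℂ) : ℝ :=
  Real.sqrt (∑ i, ∑ j, Complex.normSq (A i j))

/-- The block-companion matrix built from the delay-shift structure and an
optimal last block row `B⋆` is a global minimizer of the full Frobenius
least-squares problem. -/
theorem block_companion_minimizer
    (L D N : ℕ) (hL : 1 ≤ L) (hD : 1 ≤ D) (hN : 1 ≤ N)
    (X₀ X₁ : Matrix (Fin L × Fin D) (Fin N) ℂ)
    -- delay-shift relations: X₁^{(ℓ)} = X₀^{(ℓ+1)} for ℓ = 0,…,L−2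
    (hshift : ∀ (ℓ ℓ' : Fin L), (ℓ' : ℕ) = (ℓ : ℕ) + 1 →
      ∀ (d : Fin D) (k : Fin N), X₁ (ℓ, d) k = X₀ (ℓ', d) k)
    (Bstar : Matrix (Fin D) (Fin L × Fin D) ℂ)
    -- B⋆ minimizes the last block row problem
    (hBstar : ∀ B : Matrix (Fin D) (Fin L × Fin D) ℂ,
      frobNorm (Bstar * X₀ - Matrix.of (fun d k => X₁ (⟨L - 1, by omega⟩, d) k)) ≤
      frobNorm (B * X₀ - Matrix.of (fun d k => X₁ (⟨L - 1, by omega⟩, d) k)))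
    (C : Matrix (Fin L × Fin D) (Fin L × Fin D) ℂ)
    -- shift structure of C on block rows ℓ < L−1
    (hCshift : ∀ (ℓ ℓ' : Fin L) (d d' : Fin D), (ℓ : ℕ) < L - 1 →
      C (ℓ, d) (ℓ', d') = if (ℓ' : ℕ) = (ℓ : ℕ) + 1 ∧ d' = d then 1 else 0)
    -- last block row of C equals B⋆
    (hClast : ∀ (d : Fin D) (j : Fin L × Fin D),
      C (⟨L - 1, by omega⟩, d) j = Bstar d j) :
    ∀ A : Matrix (Fin L × Fin D) (Fin L × Fin D) ℂ,
      frobNorm (C * X₀ - X₁) ≤ frobNorm (A * X₀ - X₁) := by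
  intro A
  have hlastlt : L - 1 < L := by omega
  set last : Fin L := ⟨L - 1, hlastlt⟩ with hlastdef
  set M : Matrix (Fin D) (Fin N) ℂ :=
    Matrix.of (fun d k => X₁ (⟨L - 1, by omega⟩, d) k) with hM
  -- rows below the last block vanish for C
  have key : ∀ (ℓ : Fin L), (ℓ : ℕ) < L - 1 → ∀ (d : Fin D) (k : Fin N),
      (C * X₀ - X₁) (ℓ, d) k = 0 := by
    intro ℓ hℓ d k
    have hℓ1 : (ℓ : ℕ) + 1 < L := by omega
    have hmul : (C * X₀) (ℓ, d) k = X₀ (⟨(ℓ : ℕ) + 1, hℓ1⟩, d) k := by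
      rw [Matrix.mul_apply, Fintype.sum_prod_type]
      rw [Finset.sum_eq_single (⟨(ℓ : ℕ) + 1, hℓ1⟩ : Fin L)]
      · rw [Finset.sum_eq_single d]
        · rw [hCshift _ _ _ _ hℓ]; simp
        · intro d' _ hd'; rw [hCshift _ _ _ _ hℓ]; simp [hd']
        · simp
      · intro ℓ' _ hℓ'
        apply Finset.sum_eq_zero; intro d' _
        rw [hCshift _ _ _ _ hℓ]
        have hne : ¬((ℓ' : ℕ) = (ℓ : ℕ) + 1) := by
          intro h; exact hℓ' (Fin.ext h)
        simp [hne]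
      · simp
    have hs := hshift ℓ ⟨(ℓ : ℕ) + 1, hℓ1⟩ rfl d k
    simp [Matrix.sub_apply, hmul, hs]
  -- last row of C*X₀ - X₁ equals Bstar*X₀ - M
  have lastC : ∀ (d : Fin D) (k : Fin N),
      (C * X₀ - X₁) (last, d) k = (Bstar * X₀ - M) d k := by
    intro d k
    simp only [Matrix.sub_apply, Matrix.mul_apply, hM, Matrix.of_apply]
    congr 1
    exact Finset.sum_congr rfl (fun j _ => by rw [hClast d j])
  -- the last block row of A
  set A' : Matrix (Fin D) (Fin L × Fin D) ℂ :=
    Matrix.of (fun d j => A (last, d) j) with hA'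
  have lastA : ∀ (d : Fin D) (k : Fin N),
      (A * X₀ - X₁) (last, d) k = (A' * X₀ - M) d k := by
    intro d k
    simp only [Matrix.sub_apply, Matrix.mul_apply, hM, hA', Matrix.of_apply]
    rfl
  -- sums
  have hCsum : (∑ i, ∑ j, Complex.normSq ((C * X₀ - X₁) i j))
      = ∑ d, ∑ k, Complex.normSq ((Bstar * X₀ - M) d k) := by
    rw [Fintype.sum_prod_type]
    rw [Finset.sum_eq_single last]
    · exact Finset.sum_congr rfl (fun d _ =>
        Finset.sum_congr rfl (fun k _ => by rw [lastC d k]))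
    · intro ℓ _ hℓ
      have hlt : (ℓ : ℕ) < L - 1 := by
        have := ℓ.isLt
        rcases lt_or_eq_of_le (Nat.le_of_lt_succ (by omega : (ℓ:ℕ) < (L-1)+1)) with h | h
        · exact h
        · exact absurd (Fin.ext h : ℓ = last) hℓ
      apply Finset.sum_eq_zero; intro d _
      apply Finset.sum_eq_zero; intro k _
      rw [key ℓ hlt d k]; simp
    · simp
  have hAsum : (∑ d, ∑ k, Complex.normSq ((A' * X₀ - M) d k))
      ≤ ∑ i, ∑ j, Complex.normSq ((A * X₀ - X₁) i j) := by
    rw [Fintype.sum_prod_type]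
    have : (∑ d, ∑ k, Complex.normSq ((A' * X₀ - M) d k))
        = ∑ d, ∑ k, Complex.normSq ((A * X₀ - X₁) (last, d) k) := by
      exact Finset.sum_congr rfl (fun d _ =>
        Finset.sum_congr rfl (fun k _ => by rw [lastA d k]))
    rw [this]
    exact Finset.single_le_sum
      (f := fun ℓ => ∑ d, ∑ k, Complex.normSq ((A * X₀ - X₁) (ℓ, d) k))
      (fun ℓ _ => Finset.sum_nonneg fun d _ =>
        Finset.sum_nonneg fun k _ => Complex.normSq_nonneg _)
      (Finset.mem_univ last)
  -- B⋆ optimality as sums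
  have hBsum : (∑ d, ∑ k, Complex.normSq ((Bstar * X₀ - M) d k))
      ≤ ∑ d, ∑ k, Complex.normSq ((A' * X₀ - M) d k) := by
    have h := hBstar A'
    unfold frobNorm at h
    have h1 : (0:ℝ) ≤ ∑ d, ∑ k, Complex.normSq ((A' * X₀ - M) d k) :=
      Finset.sum_nonneg fun d _ =>
        Finset.sum_nonneg fun k _ => Complex.normSq_nonneg _
    exact (Real.sqrt_le_sqrt_iff h1).mp h
  unfold frobNorm
  apply Real.sqrt_le_sqrt
  rw [hCsum]
  exact hBsum.trans hAsum
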